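/- (Eakin-Nagata type theorem for uniformly S-Noetherian rings) Let R be a commutative ring, S an anti-Archimedean multiplicative subset of R, and T a ring extension of R that is S-finite as an R-module. Then the following are equivalent: (1) R is a uniformly S-Noetherian ring; (2) T is a uniformly S-Noetherian ring; (3) there exists s ∈ S such that 𝔭T is an s-finite ideal of T for every prime ideal 𝔭 of R; (4) T is a uniformly S-Noetherian R-module. -/

import Mathlib

/-- A submodule `N` is `s`-finite if there is a finitely generated submodule `F`
with `s N ⊆ F ⊆ N`. -/
def SFinSub {R M : Type*} [CommRing R] [AddCommGroup M] [Module R M]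
    (s : R) (N : Submodule R M) : Prop :=
  ∃ F : Submodule R M, F.FG ∧ F ≤ N ∧ ∀ x ∈ N, s • x ∈ F

/-- `S` is anti-Archimedean: for every `s ∈ S`, `(⋂_{n ≥ 1} sⁿR) ∩ S ≠ ∅`. -/
def AntiArchimedean {R : Type*} [CommRing R] (S : Submonoid R) : Prop :=
  ∀ s ∈ S, ∃ t ∈ S, ∀ n : ℕ, 1 ≤ n → s ^ n ∣ t

section Helpers

variable {R M A B : Type*} [CommRing R] [AddCommGroup M] [Module R M]
  [AddCommGroup A] [Module R A] [AddCommGroup B] [Module R B]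

lemma sfin_of_dvd {s t : R} {N : Submodule R M} (hdvd : s ∣ t) (h : SFinSub s N) :
    SFinSub t N := by
  obtain ⟨c, rfl⟩ := hdvd
  obtain ⟨F, hfg, hle, hmem⟩ := h
  exact ⟨F, hfg, hle, fun x hx => by
    rw [mul_comm, mul_smul]; exact F.smul_mem c (hmem x hx)⟩

lemma sfin_map {s : R} {N : Submodule R M} (f : M →ₗ[R] A) (h : SFinSub s N) :
    SFinSub s (N.map f) := by
  obtain ⟨F, hfg, hle, hmem⟩ := h
  refine ⟨F.map f, hfg.map f, Submodule.map_mono hle, ?_⟩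
  rintro x ⟨y, hy, rfl⟩
  exact ⟨s • y, hmem y hy, f.map_smul s y⟩

lemma sfin_of_inj {s : R} {N : Submodule R M} (f : M →ₗ[R] A) (hf : Function.Injective f)
    (h : SFinSub s (N.map f)) : SFinSub s N := by
  obtain ⟨F, ⟨fs, hspan⟩, hle, hmem⟩ := h
  have hchoose : ∀ w : fs, ∃ a : M, a ∈ N ∧ f a = (w : A) := by
    rintro ⟨w, hw⟩
    have : w ∈ N.map f := hle (hspan ▸ Submodule.subset_span hw)
    obtain ⟨a, ha, rfl⟩ := this
    exact ⟨a, ha, rfl⟩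
  choose g hgN hgf using hchoose
  refine ⟨Submodule.span R (Set.range g), Submodule.fg_span (Set.finite_range g), ?_, ?_⟩
  · rw [Submodule.span_le]; rintro _ ⟨w, rfl⟩; exact hgN w
  · intro x hx
    have hx' : s • f x ∈ F := hmem (f x) ⟨x, hx, rfl⟩
    have hFle : F ≤ Submodule.map f (Submodule.span R (Set.range g)) := by
      rw [← hspan, Submodule.span_le]
      intro w hw
      rw [Finset.mem_coe] at hw
      exact Submodule.mem_map.2 ⟨g ⟨w, hw⟩, Submodule.subset_span ⟨⟨w, hw⟩, rfl⟩, hgf _⟩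
    obtain ⟨z, hz, hzf⟩ := hFle hx'
    rw [← f.map_smul] at hzf
    rwa [hf hzf] at hz

end Helpers

section Keystep

variable {R M : Type*} [CommRing R] [AddCommGroup M] [Module R M]

/-- The Cohen-style composition step: if `N + aM` is `u`-finite and `(N : a)` is
`v`-finite, then `N` is `(v*u)`-finite. -/
lemma keystep {u v a : R} {N : Submodule R M}
    (hP : SFinSub u (N ⊔ Submodule.map (LinearMap.lsmul R M a) ⊤))
    (hQ : SFinSub v (N.comap (LinearMap.lsmul R M a))) :
    SFinSub (v * u) N := by
  obtain ⟨FP, ⟨fsP, hspanP⟩, hleP, hmemP⟩ := hP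
  obtain ⟨FQ, hfgQ, hleQ, hmemQ⟩ := hQ
  have hdec : ∀ w : fsP, ∃ nm : M × M, nm.1 ∈ N ∧ (w : M) = nm.1 + a • nm.2 := by
    rintro ⟨w, hw⟩
    have hwP : w ∈ N ⊔ Submodule.map (LinearMap.lsmul R M a) ⊤ :=
      hleP (hspanP ▸ Submodule.subset_span hw)
    obtain ⟨n, hn, z, hz, rfl⟩ := Submodule.mem_sup.1 hwP
    obtain ⟨m, -, rfl⟩ := hz
    exact ⟨(n, m), hn, rfl⟩
  choose nm hnmN hnmeq using hdec
  set F₀ : Submodule R M :=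
    Submodule.span R (Set.range fun w => (nm w).1) ⊔ FQ.map (LinearMap.lsmul R M a) with hF₀
  refine ⟨F₀, Submodule.FG.sup (Submodule.fg_span (Set.finite_range _)) (hfgQ.map _), ?_, ?_⟩
  · apply sup_le
    · rw [Submodule.span_le]; rintro _ ⟨w, rfl⟩; exact hnmN w
    · rintro _ ⟨q, hq, rfl⟩
      exact hleQ hq
  · intro x hx
    have hux : u • x ∈ Submodule.span R (↑fsP : Set M) := by
      rw [hspanP]
      exact hmemP x (Submodule.mem_sup_left hx)
    obtain ⟨cf, -, hcf⟩ := Submodule.mem_span_finset.1 hux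
    have hsum : u • x = (∑ w ∈ fsP.attach, cf w • (nm w).1) +
        a • (∑ w ∈ fsP.attach, cf w • (nm w).2) := by
      rw [Finset.smul_sum, ← Finset.sum_add_distrib, ← hcf, ← Finset.sum_attach fsP (fun w => cf w • w)]
      refine Finset.sum_congr rfl fun w _ => ?_
      rw [hnmeq w, smul_add, smul_comm]
    set y := ∑ w ∈ fsP.attach, cf w • (nm w).2 with hy
    have hyQ : y ∈ N.comap (LinearMap.lsmul R M a) := by
      have : a • y = u • x - ∑ w ∈ fsP.attach, cf w • (nm w).1 := by
        rw [hsum]; abel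
      have hmem' : a • y ∈ N := by
        rw [this]
        exact Submodule.sub_mem N (N.smul_mem u hx)
          (Submodule.sum_mem N fun w _ => N.smul_mem _ (hnmN w))
      exact hmem'
    have hvy : v • y ∈ FQ := hmemQ y hyQ
    have : (v * u) • x = (∑ w ∈ fsP.attach, cf w • (v • (nm w).1)) + a • (v • y) := by
      rw [mul_smul, hsum, smul_add]
      rw [Finset.smul_sum, smul_comm a v]
      congr 1
      refine Finset.sum_congr rfl fun w _ => ?_
      rw [smul_comm]
    rw [this]
    apply Submodule.add_mem
    · apply Submodule.mem_sup_left
      exact Submodule.sum_mem _ fun w _ => Submodule.smul_mem _ _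
        (Submodule.smul_mem _ _ (Submodule.subset_span ⟨w, rfl⟩))
    · exact Submodule.mem_sup_right ⟨v • y, hvy, rfl⟩

end Keystep

section SPF

variable {R : Type*} [CommRing R]

/-- Every submodule is `sⁿ`-finite for some `n`. -/
def AllSPF (s : R) (A : Type*) [AddCommGroup A] [Module R A] : Prop :=
  ∀ X : Submodule R A, ∃ n : ℕ, SFinSub (s ^ n) X

variable {A B : Type*} [AddCommGroup A] [Module R A] [AddCommGroup B] [Module R B] {s : R}

lemma allSPF_of_injective (f : A →ₗ[R] B) (hf : Function.Injective f) (h : AllSPF s B) :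
    AllSPF s A := fun X => (h (X.map f)).imp fun _ hn => sfin_of_inj f hf hn

lemma allSPF_of_surjective (f : A →ₗ[R] B) (hf : Function.Surjective f) (h : AllSPF s A) :
    AllSPF s B := fun X => by
  obtain ⟨n, hn⟩ := h (X.comap f)
  have h2 := sfin_map f hn
  rw [Submodule.map_comap_eq_of_surjective hf] at h2
  exact ⟨n, h2⟩

lemma allSPF_prod (hA : AllSPF s A) (hB : AllSPF s B) : AllSPF s (A × B) := by
  intro N
  set π₁ := LinearMap.fst R A B with hπ₁
  set π₂ := LinearMap.snd R A B with hπ₂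
  obtain ⟨a, F₂, ⟨fs₂, hspan₂⟩, hle₂, hmem₂⟩ := hB (N.map π₂)
  have h2 : ∀ w : fs₂, ∃ uq : A × B, uq ∈ N ∧ π₂ uq = (w : B) := by
    rintro ⟨w, hw⟩
    obtain ⟨uq, hu, hu2⟩ := hle₂ (hspan₂ ▸ Submodule.subset_span hw)
    exact ⟨uq, hu, hu2⟩
  choose uf hufN hufs using h2
  set K : Submodule R (A × B) := N ⊓ LinearMap.ker π₂ with hK
  obtain ⟨b, F₁, ⟨fs₁, hspan₁⟩, hle₁, hmem₁⟩ := hA (K.map π₁)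
  have h1 : ∀ v : fs₁, ∃ wp : A × B, wp ∈ K ∧ π₁ wp = (v : A) := by
    rintro ⟨v, hv⟩
    obtain ⟨wp, hw, hw1⟩ := hle₁ (hspan₁ ▸ Submodule.subset_span hv)
    exact ⟨wp, hw, hw1⟩
  choose wf hwfK hwff using h1
  refine ⟨a + b, Submodule.span R (Set.range uf) ⊔ Submodule.span R (Set.range wf),
    Submodule.FG.sup (Submodule.fg_span (Set.finite_range _))
      (Submodule.fg_span (Set.finite_range _)), ?_, ?_⟩
  · apply sup_le <;> rw [Submodule.span_le] <;> rintro _ ⟨w, rfl⟩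
    · exact hufN w
    · exact (hwfK w).1
  · intro x hx
    have hsx : (s ^ a) • π₂ x ∈ Submodule.span R (↑fs₂ : Set B) := by
      rw [hspan₂]; exact hmem₂ _ ⟨x, hx, rfl⟩
    obtain ⟨cf, -, hcf⟩ := Submodule.mem_span_finset.1 hsx
    set y := ∑ w ∈ fs₂.attach, cf w • uf w with hy
    have hyN : y ∈ N := Submodule.sum_mem N fun w _ => N.smul_mem _ (hufN w)
    have hysp : y ∈ Submodule.span R (Set.range uf) :=
      Submodule.sum_mem _ fun w _ => Submodule.smul_mem _ _ (Submodule.subset_span ⟨w, rfl⟩)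
    set z := (s ^ a) • x - y with hz
    have hy2 : π₂ y = (s ^ a) • π₂ x := by
      rw [hy, map_sum]
      calc ∑ w ∈ fs₂.attach, π₂ (cf ↑w • uf w)
          = ∑ w ∈ fs₂.attach, cf ↑w • (w : B) := by
            refine Finset.sum_congr rfl fun w _ => ?_
            rw [map_smul, hufs]
        _ = ∑ w ∈ fs₂, cf w • w := Finset.sum_attach fs₂ (fun w => cf w • w)
        _ = (s ^ a) • π₂ x := hcf
    have hzker : π₂ z = 0 := by rw [hz, map_sub, map_smul, hy2, sub_self]
    have hzK : z ∈ K :=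
      Submodule.mem_inf.2 ⟨Submodule.sub_mem N (N.smul_mem _ hx) hyN, LinearMap.mem_ker.2 hzker⟩
    have hsz : (s ^ b) • π₁ z ∈ Submodule.span R (↑fs₁ : Set A) := by
      rw [hspan₁]; exact hmem₁ _ ⟨z, hzK, rfl⟩
    obtain ⟨df, -, hdf⟩ := Submodule.mem_span_finset.1 hsz
    set ζ := ∑ v ∈ fs₁.attach, df v • wf v with hζ
    have hζsp : ζ ∈ Submodule.span R (Set.range wf) :=
      Submodule.sum_mem _ fun v _ => Submodule.smul_mem _ _ (Submodule.subset_span ⟨v, rfl⟩)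
    have hζ1 : π₁ ζ = (s ^ b) • π₁ z := by
      rw [hζ, map_sum]
      calc ∑ v ∈ fs₁.attach, π₁ (df ↑v • wf v)
          = ∑ v ∈ fs₁.attach, df ↑v • (v : A) := by
            refine Finset.sum_congr rfl fun v _ => ?_
            rw [map_smul, hwff]
        _ = ∑ v ∈ fs₁, df v • v := Finset.sum_attach fs₁ (fun v => df v • v)
        _ = (s ^ b) • π₁ z := hdf
    have hζ2 : π₂ ζ = 0 := by
      rw [hζ, map_sum]
      refine Finset.sum_eq_zero fun v _ => ?_
      rw [map_smul, (hwfK v).2, smul_zero]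
    have hzζ : (s ^ b) • z = ζ := by
      ext
      · exact hζ1.symm
      · show (s ^ b) • z.2 = ζ.2
        have e1 : z.2 = π₂ z := rfl
        have e2 : ζ.2 = π₂ ζ := rfl
        rw [e1, e2, hzker, hζ2, smul_zero]
    have hfinal : (s ^ (a + b)) • x = (s ^ b) • y + ζ := by
      rw [pow_add, mul_comm, mul_smul, ← hzζ, hz]
      rw [smul_sub]
      abel
    rw [hfinal]
    exact Submodule.add_mem _ (Submodule.mem_sup_left (Submodule.smul_mem _ _ hysp))
      (Submodule.mem_sup_right hζsp)

lemma allSPF_subsingleton [Subsingleton A] : AllSPF s A := by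
  intro X
  refine ⟨0, ⊥, Submodule.fg_bot, bot_le, fun x _ => ?_⟩
  rw [Subsingleton.elim x 0, smul_zero]
  exact Submodule.zero_mem ⊥

lemma allSPF_pi (hA : AllSPF s A) : ∀ n : ℕ, AllSPF s (Fin n → A)
  | 0 => allSPF_subsingleton
  | (n + 1) => by
    have hprod := allSPF_prod hA (allSPF_pi hA n)
    refine allSPF_of_injective
      (LinearMap.prod (LinearMap.proj 0) (LinearMap.pi fun i : Fin n => LinearMap.proj i.succ))
      ?_ hprod
    intro x y hxy
    simp only [LinearMap.prod_apply, Function.prod_apply, Prod.mk.injEq, LinearMap.pi_apply,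
      LinearMap.proj_apply] at hxy
    funext i
    refine Fin.cases ?_ ?_ i
    · exact hxy.1
    · intro j
      exact congrFun hxy.2 j

end SPF

section Cohen

variable {R M : Type*} [CommRing R] [AddCommGroup M] [Module R M]

lemma cohen_module (s₀ s₁ : R) (G : Submodule R M) (hGfg : G.FG)
    (hs₀ : ∀ x : M, s₀ • x ∈ G)
    (hp : ∀ p : Ideal R, p.IsPrime → SFinSub s₁ (p • (⊤ : Submodule R M))) :
    ∀ N : Submodule R M, ∃ n : ℕ, SFinSub ((s₀ * s₁) ^ n) N := by
  classical
  set s := s₀ * s₁ with hs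
  by_contra hcon
  push_neg at hcon
  obtain ⟨N₀, hN₀⟩ := hcon
  have hN₀' : ∀ n : ℕ, ¬ SFinSub (s ^ n) N₀ := hN₀
  set Sig : Set (Submodule R M) := {N | ∀ n : ℕ, ¬ SFinSub (s ^ n) N} with hSig
  have hchain : ∀ c ⊆ Sig, IsChain (· ≤ ·) c → ∀ y ∈ c, ∃ ub ∈ Sig, ∀ z ∈ c, z ≤ ub := by
    intro c hcS hchain y hyc
    refine ⟨sSup c, ?_, fun z hz => le_sSup hz⟩
    intro n hfin
    obtain ⟨F, ⟨fs, hspan⟩, hle, hmem⟩ := hfin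
    have hbound : ∀ t : Finset M, (↑t : Set M) ⊆ (sSup c : Submodule R M) →
        ∃ N' ∈ c, (↑t : Set M) ⊆ N' := by
      intro t
      induction t using Finset.induction_on with
      | empty => intro _; exact ⟨y, hyc, by simp⟩
      | @insert w t hwt ih =>
        intro hins
        rw [Finset.coe_insert, Set.insert_subset_iff] at hins
        obtain ⟨N₁, hN₁c, hN₁⟩ := ih hins.2
        have hw : w ∈ sSup c := hins.1
        rw [Submodule.mem_sSup_of_directed ⟨y, hyc⟩ hchain.directedOn] at hw
        obtain ⟨N₂, hN₂c, hwN₂⟩ := hw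
        rcases eq_or_ne N₁ N₂ with rfl | hne
        · exact ⟨N₁, hN₁c, by rw [Finset.coe_insert, Set.insert_subset_iff]; exact ⟨hwN₂, hN₁⟩⟩
        rcases hchain hN₁c hN₂c hne with h12 | h21
        · exact ⟨N₂, hN₂c, by
            rw [Finset.coe_insert, Set.insert_subset_iff]
            exact ⟨hwN₂, fun x hx => h12 (hN₁ hx)⟩⟩
        · exact ⟨N₁, hN₁c, by
            rw [Finset.coe_insert, Set.insert_subset_iff]
            exact ⟨h21 hwN₂, hN₁⟩⟩
    obtain ⟨N', hN'c, hN'⟩ := hbound fs (fun x hx => hle (hspan ▸ Submodule.subset_span hx))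
    refine hcS hN'c n ⟨F, ⟨fs, hspan⟩, ?_, fun x hx => hmem x (le_sSup hN'c hx)⟩
    rw [← hspan, Submodule.span_le]; exact hN'
  obtain ⟨N, -, hNSig, hNmax⟩ := zorn_le_nonempty₀ Sig hchain N₀ hN₀'
  -- basic consequences of maximality
  have hstrict : ∀ P : Submodule R M, N < P → ∃ n, SFinSub (s ^ n) P := by
    intro P hlt
    by_contra hP
    push_neg at hP
    exact hlt.not_ge (hNmax hP hlt.le)
  have htop : SFinSub (s ^ 1) (⊤ : Submodule R M) := by
    refine ⟨G, hGfg, le_top, fun x _ => ?_⟩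
    rw [pow_one, hs, mul_comm, mul_smul]
    exact G.smul_mem s₁ (hs₀ x)
  have hNne : N ≠ ⊤ := fun h => hNSig 1 (h ▸ htop)
  set p : Ideal R := N.colon ⊤ with hpdef
  have hmemp : ∀ a : R, a ∈ p ↔ ∀ x : M, a • x ∈ N := by
    intro a
    rw [hpdef, Submodule.mem_colon]
    exact ⟨fun h x => h x trivial, fun h x _ => h x⟩
  have hsupstrict : ∀ a : R, a ∉ p → N < N ⊔ Submodule.map (LinearMap.lsmul R M a) ⊤ := by
    intro a ha
    rcases lt_or_eq_of_le (le_sup_left :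
      N ≤ N ⊔ Submodule.map (LinearMap.lsmul R M a) ⊤) with h | h
    · exact h
    exfalso
    apply ha
    rw [hmemp]
    intro x
    have : a • x ∈ N ⊔ Submodule.map (LinearMap.lsmul R M a) ⊤ :=
      Submodule.mem_sup_right ⟨x, trivial, rfl⟩
    rwa [← h] at this
  have hcomapN : ∀ a : R, a ∉ p → N.comap (LinearMap.lsmul R M a) = N := by
    intro a ha
    have hle' : N ≤ N.comap (LinearMap.lsmul R M a) := fun x hx => N.smul_mem a hx
    rcases lt_or_eq_of_le hle' with hlt | heq
    · exfalso
      obtain ⟨k, hk⟩ := hstrict _ hlt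
      obtain ⟨m, hm⟩ := hstrict _ (hsupstrict a ha)
      have := keystep hm hk
      rw [← pow_add] at this
      exact hNSig _ this
    · exact heq.symm
  have hprime : p.IsPrime := by
    constructor
    · intro h
      apply hNne
      have h1 : (1 : R) ∈ p := h ▸ trivial
      rw [hmemp] at h1
      rw [eq_top_iff]
      intro x _
      simpa using h1 x
    · intro a b hab
      by_contra hcon2
      push_neg at hcon2
      obtain ⟨ha, hb⟩ := hcon2
      obtain ⟨y, hy⟩ : ∃ y : M, b • y ∉ N := by
        by_contra hall; push_neg at hall
        exact hb ((hmemp b).2 hall)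
      have : b • y ∈ N.comap (LinearMap.lsmul R M a) := by
        show a • b • y ∈ N
        rw [← mul_smul]
        exact (hmemp _).1 hab y
      rw [hcomapN a ha] at this
      exact hy this
  have hpN : p • (⊤ : Submodule R M) ≤ N := by
    refine Submodule.smul_le.2 fun r hr x _ => ?_
    exact (hmemp r).1 hr x
  obtain ⟨F₁, hF₁fg, hF₁le, hF₁mem⟩ := hp p hprime
  have hsnotp : s ∉ p := by
    intro hsp
    apply hNSig 2
    refine ⟨F₁, hF₁fg, le_trans hF₁le hpN, fun x hx => ?_⟩
    have h1 : s • x ∈ p • (⊤ : Submodule R M) := Submodule.smul_mem_smul hsp trivial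
    have h2 : s₁ • s • x ∈ F₁ := hF₁mem _ h1
    have h3 : (s ^ 2) • x = s₀ • (s₁ • (s • x)) := by
      rw [← mul_smul, ← mul_smul, ← hs]; ring_nf
    rw [h3]
    exact F₁.smul_mem s₀ h2
  have hs₀notp : s₀ ∉ p := fun h => hsnotp (hs ▸ Ideal.mul_mem_right s₁ p h)
  have hs₁notp : s₁ ∉ p := fun h => hsnotp (hs ▸ Ideal.mul_mem_left p s₀ h)
  -- the quotient module Q = M / N has all submodules s-power-finite
  have hQspf : AllSPF s (M ⧸ N) := by
    intro X
    set P := X.comap N.mkQ with hP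
    have hNP : N ≤ P := by
      intro x hx
      show N.mkQ x ∈ X
      rw [Submodule.mkQ_apply, (Submodule.Quotient.mk_eq_zero N).2 hx]
      exact X.zero_mem
    rcases lt_or_eq_of_le hNP with hlt | heq
    · obtain ⟨n, hn⟩ := hstrict P hlt
      have := sfin_map N.mkQ hn
      rw [hP, Submodule.map_comap_eq_of_surjective (Submodule.mkQ_surjective N)] at this
      exact ⟨n, this⟩
    · refine ⟨0, ⊥, Submodule.fg_bot, bot_le, fun x hx => ?_⟩
      have hX : X = ⊥ := by
        have := Submodule.map_comap_eq_of_surjective (Submodule.mkQ_surjective N) X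
        rw [← hP, ← heq] at this
        rw [← this, Submodule.eq_bot_iff]
        rintro _ ⟨z, hz, rfl⟩
        rw [Submodule.mkQ_apply]
        exact (Submodule.Quotient.mk_eq_zero N).2 hz
      rw [hX, Submodule.mem_bot] at hx
      rw [hx, smul_zero]
      exact Submodule.zero_mem ⊥
  -- generators of G
  obtain ⟨K, g, hg⟩ := Submodule.fg_iff_exists_fin_generating_family.1 hGfg
  -- the map ψ₀ : R → (Fin K → M/N)
  set ψ₀ : R →ₗ[R] (Fin K → M ⧸ N) :=
    LinearMap.pi (fun k => LinearMap.toSpanSingleton R (M ⧸ N) (N.mkQ (g k))) with hψ₀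
  have hkerp : LinearMap.ker ψ₀ ≤ (p : Submodule R R) := by
    intro r hr
    have hrg : ∀ k, r • g k ∈ N := by
      intro k
      have h0 : ψ₀ r = 0 := hr
      have hk := congrFun h0 k
      simp only [hψ₀, LinearMap.pi_apply, LinearMap.toSpanSingleton_apply, Pi.zero_apply] at hk
      rwa [Submodule.mkQ_apply, ← Submodule.Quotient.mk_smul,
        Submodule.Quotient.mk_eq_zero] at hk
    have hrG : ∀ x ∈ G, r • x ∈ N := by
      intro x hx
      rw [← hg] at hx
      induction hx using Submodule.span_induction with
      | mem x hx => obtain ⟨k, rfl⟩ := hx; exact hrg k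
      | zero => rw [smul_zero]; exact N.zero_mem
      | add x y _ _ hx hy => rw [smul_add]; exact N.add_mem hx hy
      | smul c x _ hx => rw [smul_comm]; exact N.smul_mem c hx
    have hrs₀ : r * s₀ ∈ p := by
      rw [hmemp]
      intro x
      rw [mul_smul]
      exact hrG _ (hs₀ x)
    exact (hprime.mem_or_mem hrs₀).resolve_right hs₀notp
  -- D := R / ker ψ₀ has all submodules s-power-finite
  have hDspf : AllSPF s (R ⧸ LinearMap.ker ψ₀) := by
    refine allSPF_of_injective ((LinearMap.ker ψ₀).liftQ ψ₀ le_rfl) ?_ (allSPF_pi hQspf K)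
    rw [← LinearMap.ker_eq_bot]
    exact Submodule.ker_liftQ_eq_bot _ _ _ le_rfl
  -- the module Q₂ = M / pM and X = image of G
  set pM : Submodule R M := p • ⊤ with hpM
  set mk₂ : M →ₗ[R] M ⧸ pM := pM.mkQ with hmk₂
  set X : Submodule R (M ⧸ pM) := Submodule.span R (Set.range fun k => mk₂ (g k)) with hX
  have hXmap : G.map mk₂ = X := by
    rw [← hg, Submodule.map_span, hX, ← Set.range_comp]
    rfl
  have hgX : ∀ k, mk₂ (g k) ∈ X := fun k => Submodule.subset_span ⟨k, rfl⟩
  have hσker : ∀ k, LinearMap.ker ψ₀ ≤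
      LinearMap.ker (LinearMap.toSpanSingleton R X (⟨mk₂ (g k), hgX k⟩ : X)) := by
    intro k r hr
    have hrp : r ∈ p := hkerp hr
    show r • (⟨mk₂ (g k), hgX k⟩ : X) = 0
    apply Subtype.ext
    show r • mk₂ (g k) = 0
    rw [hmk₂, Submodule.mkQ_apply, ← Submodule.Quotient.mk_smul, Submodule.Quotient.mk_eq_zero]
    exact Submodule.smul_mem_smul hrp trivial
  set γ : ∀ _ : Fin K, (R ⧸ LinearMap.ker ψ₀) →ₗ[R] X :=
    fun k => (LinearMap.ker ψ₀).liftQ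
      (LinearMap.toSpanSingleton R X (⟨mk₂ (g k), hgX k⟩ : X)) (hσker k) with hγ
  set θ : (Fin K → R ⧸ LinearMap.ker ψ₀) →ₗ[R] X :=
    LinearMap.lsum R (fun _ : Fin K => R ⧸ LinearMap.ker ψ₀) R γ with hθ
  have hθsurj : Function.Surjective θ := by
    rw [← LinearMap.range_eq_top]
    have hgen : Submodule.span R (Set.range fun k => (⟨mk₂ (g k), hgX k⟩ : X)) = ⊤ := by
      apply Submodule.map_injective_of_injective X.injective_subtype
      rw [Submodule.map_span, Submodule.map_subtype_top, ← Set.range_comp]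
      exact hX.symm
    rw [eq_top_iff, ← hgen, Submodule.span_le]
    rintro _ ⟨k, rfl⟩
    refine ⟨Pi.single k (Submodule.Quotient.mk 1), ?_⟩
    rw [hθ, LinearMap.lsum_apply]
    rw [LinearMap.coe_sum, Finset.sum_apply]
    rw [Finset.sum_eq_single k]
    · simp only [LinearMap.comp_apply, LinearMap.proj_apply, Pi.single_eq_same, hγ]
      rw [Submodule.liftQ_apply]
      exact one_smul _ _
    · intro j _ hjk
      simp only [LinearMap.comp_apply, LinearMap.proj_apply, Pi.single_eq_of_ne hjk, map_zero]
    · intro h; exact absurd (Finset.mem_univ k) h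
  have hXspf : AllSPF s X := allSPF_of_surjective θ hθsurj (allSPF_pi hDspf K)
  -- extract the finiteness of N ⊓ G modulo pM
  obtain ⟨m, FY, ⟨fsY, hspanY⟩, hleY, hmemY⟩ := hXspf (((N ⊓ G).map mk₂).comap X.subtype)
  have hlift : ∀ w : fsY, ∃ u : M, u ∈ N ⊓ G ∧ mk₂ u = ((w : X) : M ⧸ pM) := by
    rintro ⟨w, hw⟩
    have : w ∈ ((N ⊓ G).map mk₂).comap X.subtype := hleY (hspanY ▸ Submodule.subset_span hw)
    obtain ⟨u, hu, hueq⟩ := this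
    exact ⟨u, hu, hueq⟩
  choose uf hufNG hufeq using hlift
  have hNG : ∀ x ∈ N ⊓ G, (s ^ m) • x ∈ Submodule.span R (Set.range uf) ⊔ pM := by
    intro x hx
    have hxX : mk₂ x ∈ X := hXmap ▸ ⟨x, hx.2, rfl⟩
    have hξ : (⟨mk₂ x, hxX⟩ : X) ∈ ((N ⊓ G).map mk₂).comap X.subtype := by
      show X.subtype ⟨mk₂ x, hxX⟩ ∈ (N ⊓ G).map mk₂
      exact ⟨x, hx, rfl⟩
    have hsm : (s ^ m) • (⟨mk₂ x, hxX⟩ : X) ∈ FY := hmemY _ hξ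
    have hval : (s ^ m) • mk₂ x ∈ FY.map X.subtype := ⟨_, hsm, rfl⟩
    have hFYmap : FY.map X.subtype = (Submodule.span R (Set.range uf)).map mk₂ := by
      rw [← hspanY, Submodule.map_span, Submodule.map_span, ← Set.range_comp]
      congr 1
      ext z
      simp only [Set.mem_image, Finset.mem_coe, Set.mem_range, Function.comp]
      constructor
      · rintro ⟨w, hw, rfl⟩
        exact ⟨⟨w, hw⟩, hufeq ⟨w, hw⟩⟩
      · rintro ⟨w, rfl⟩
        exact ⟨w, w.2, (hufeq w).symm⟩
    rw [hFYmap] at hval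
    obtain ⟨w', hw'span, hw'eq⟩ := hval
    have hsub : (s ^ m) • x - w' ∈ pM := by
      have h0 : mk₂ ((s ^ m) • x - w') = 0 := by
        rw [map_sub, map_smul, hw'eq, sub_self]
      rwa [hmk₂, Submodule.mkQ_apply, Submodule.Quotient.mk_eq_zero] at h0
    exact Submodule.mem_sup.2 ⟨w', hw'span, _, hsub, by abel⟩
  -- final contradiction
  refine hNSig (m + 1) ?_
  refine ⟨Submodule.span R (Set.range uf) ⊔ F₁,
    Submodule.FG.sup (Submodule.fg_span (Set.finite_range _)) hF₁fg, ?_, ?_⟩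
  · apply sup_le
    · rw [Submodule.span_le]; rintro _ ⟨w, rfl⟩; exact (hufNG w).1
    · exact le_trans hF₁le hpN
  · intro x hx
    have hx0 : s₀ • x ∈ N ⊓ G := ⟨N.smul_mem s₀ hx, hs₀ x⟩
    obtain ⟨w', hw', z, hz, heq⟩ := Submodule.mem_sup.1 (hNG _ hx0)
    have h1 : (s ^ (m+1) : R) = s₁ * (s ^ m * s₀) := by rw [pow_succ, hs]; ring
    have hcalc : (s ^ (m+1)) • x = s₁ • w' + s₁ • z := by
      rw [h1, mul_smul, mul_smul, ← heq, smul_add]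
    rw [hcalc]
    exact Submodule.add_mem _ (Submodule.mem_sup_left (Submodule.smul_mem _ _ hw'))
      (Submodule.mem_sup_right (hF₁mem z hz))

end Cohen

set_option maxHeartbeats 1000000 in
theorem eakin_nagata_uniformly_S_noetherian
    {R T : Type*} [CommRing R] [CommRing T] [Algebra R T]
    (hinj : Function.Injective (algebraMap R T))
    (S : Submonoid R) (hS : AntiArchimedean S)
    (hTfin : ∃ s ∈ S, SFinSub s (⊤ : Submodule R T)) :
    List.TFAE
      [ -- (1) R is a uniformly S-Noetherian ring
        ∃ s ∈ S, ∀ I : Ideal R, SFinSub s I,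
        -- (2) T is a uniformly S-Noetherian ring
        ∃ s ∈ S, ∀ J : Ideal T, ∃ F : Ideal T, F.FG ∧ F ≤ J ∧
          ∀ x ∈ J, algebraMap R T s * x ∈ F,
        -- (3) there is s ∈ S such that pT is an s-finite ideal of T
        --     for every prime ideal p of R
        ∃ s ∈ S, ∀ p : Ideal R, p.IsPrime →
          ∃ F : Ideal T, F.FG ∧ F ≤ p.map (algebraMap R T) ∧
            ∀ x ∈ p.map (algebraMap R T), algebraMap R T s * x ∈ F,
        -- (4) T is a uniformly S-Noetherian R-module
        ∃ s ∈ S, ∀ N : Submodule R T, SFinSub s N ] := by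
  classical
  obtain ⟨s₀, hs₀S, G, hGfg, -, hGmem⟩ := hTfin
  have hGmem' : ∀ x : T, s₀ • x ∈ G := fun x => hGmem x trivial
  -- the key step via the module-theoretic Cohen-type theorem
  have key : ∀ s' : R, s' ∈ S →
      (∀ p : Ideal R, p.IsPrime → SFinSub s' (p • (⊤ : Submodule R T))) →
      ∃ s ∈ S, ∀ N : Submodule R T, SFinSub s N := by
    intro s' hs' hpp
    obtain ⟨t, htS, hdvd⟩ := hS (s₀ * s') (S.mul_mem hs₀S hs')
    refine ⟨t, htS, fun N => ?_⟩
    obtain ⟨n, hn⟩ := cohen_module s₀ s' G hGfg hGmem' hpp N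
    refine sfin_of_dvd ?_ hn
    rcases Nat.eq_zero_or_pos n with rfl | hn1
    · rw [pow_zero]; exact one_dvd t
    · exact hdvd n hn1
  tfae_have 1 → 4
  · rintro ⟨s₁, hs₁S, h1⟩
    refine key (s₀ * s₁) (S.mul_mem hs₀S hs₁S) fun p hp => ?_
    obtain ⟨Fp, hFpfg, hFple, hFpmem⟩ := h1 p
    refine ⟨Submodule.map₂ (LinearMap.lsmul R T) Fp G, Submodule.FG.map₂ _ hFpfg hGfg, ?_, ?_⟩
    · refine Submodule.map₂_le.2 fun a ha t _ => ?_
      exact Submodule.smul_mem_smul (hFple ha) trivial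
    · intro x hx
      refine Submodule.smul_induction_on hx (fun a ha t _ => ?_) (fun x y hx' hy' => ?_)
      · have h1' : (s₀ * s₁) • (a • t) = (s₁ • a) • (s₀ • t) := by
          rw [smul_eq_mul, ← mul_smul, ← mul_smul]; ring_nf
        rw [h1']
        exact Submodule.apply_mem_map₂ _ (hFpmem a ha) (hGmem' t)
      · rw [smul_add]; exact Submodule.add_mem _ hx' hy'
  tfae_have 3 → 4
  · rintro ⟨s₁, hs₁S, h3⟩
    refine key (s₀ * s₁) (S.mul_mem hs₀S hs₁S) fun p hp => ?_
    obtain ⟨F, hFfg, hFle, hFmem⟩ := h3 p hp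
    obtain ⟨fsF, hFspan⟩ := hFfg
    refine ⟨G * Submodule.span R (↑fsF : Set T), ?_, ?_, ?_⟩
    · exact Submodule.FG.mul hGfg (Submodule.fg_span (Finset.finite_toSet fsF))
    · rw [Ideal.smul_top_eq_map]
      refine Submodule.mul_le.2 fun g _ f hf => ?_
      rw [Submodule.restrictScalars_mem]
      have hfF : f ∈ F := by
        have : Submodule.span R (↑fsF : Set T) ≤ F.restrictScalars R := by
          rw [Submodule.span_le]
          intro z hz
          show z ∈ F
          rw [← hFspan]
          exact Submodule.subset_span hz
        exact this hf
      exact hFle (Ideal.mul_mem_left F g hfF)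
    · intro x hx
      have hx' : x ∈ p.map (algebraMap R T) := by
        rw [Ideal.smul_top_eq_map, Submodule.restrictScalars_mem] at hx
        exact hx
      have hsx : algebraMap R T s₁ * x ∈ Ideal.span (↑fsF : Set T) := by
        rw [hFspan]; exact hFmem x hx'
      obtain ⟨cf, -, hcf⟩ := Submodule.mem_span_finset.1 hsx
      have hsmul : (s₀ * s₁) • x = s₀ • (algebraMap R T s₁ * x) := by
        rw [mul_smul, Algebra.smul_def s₁ x]
      rw [hsmul, ← hcf, Finset.smul_sum]
      refine Submodule.sum_mem _ fun f hf => ?_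
      have : s₀ • (cf f • f) = (s₀ • cf f) * f := by
        rw [smul_eq_mul, smul_mul_assoc]
      rw [this]
      exact Submodule.mul_mem_mul (hGmem' (cf f)) (Submodule.subset_span hf)
  tfae_have 4 → 1
  · rintro ⟨s, hsS, h4⟩
    refine ⟨s, hsS, fun I => ?_⟩
    refine sfin_of_inj (Algebra.linearMap R T) ?_ (h4 _)
    intro a b hab
    apply hinj
    simpa only [Algebra.linearMap_apply] using hab
  tfae_have 4 → 2
  · rintro ⟨s, hsS, h4⟩
    refine ⟨s, hsS, fun J => ?_⟩
    obtain ⟨F, ⟨fs, hspan⟩, hle, hmem⟩ := h4 (J.restrictScalars R)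
    refine ⟨Ideal.span (↑fs : Set T), ⟨fs, rfl⟩, ?_, ?_⟩
    · rw [Ideal.span_le]
      intro z hz
      have : z ∈ F := hspan ▸ Submodule.subset_span hz
      exact hle this
    · intro x hx
      have : s • x ∈ F := hmem x hx
      rw [← Algebra.smul_def]
      rw [← hspan] at this
      exact Submodule.span_le_restrictScalars R T (↑fs : Set T) this
  tfae_have 2 → 3
  · rintro ⟨s, hsS, h2⟩
    exact ⟨s, hsS, fun p _ => h2 (p.map (algebraMap R T))⟩
  tfae_finish
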